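/- If E ⊂ ℝ² is star-shaped with respect to a closed ball B(c, r) with r > 0 (i.e., for every x ∈ E and every y ∈ B(c, r), the segment [y, x] ⊆ E), and e is a segment contained in the closure of E with both endpoints on the boundary of E, then the distance from c to the line containing e is at least r. -/

import Mathlib

open Metric

/-- If `E ⊂ ℝ²` is open and bounded and star-shaped with respect to the closed
ball `B(c, r) ⊆ E` with `r > 0`, and `e` is a nondegenerate boundary edge of
`E` (a segment with endpoints `p ≠ q` contained in `∂E`), then the distance
from `c` to the line containing `e` is at least `r`. -/
theorem dist_center_to_edge_line (E : Set (EuclideanSpace ℝ (Fin 2)))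
    (hEopen : IsOpen E) (hEbdd : Bornology.IsBounded E)
    (c : EuclideanSpace ℝ (Fin 2)) (r : ℝ) (hr : 0 < r)
    (hball : closedBall c r ⊆ E)
    (hstar : ∀ x ∈ E, ∀ y ∈ closedBall c r, segment ℝ y x ⊆ E)
    (p q : EuclideanSpace ℝ (Fin 2)) (hpq : p ≠ q)
    (hedge : segment ℝ p q ⊆ frontier E) :
    r ≤ Metric.infDist c
        ((affineSpan ℝ ({p, q} : Set (EuclideanSpace ℝ (Fin 2)))) :
          Set (EuclideanSpace ℝ (Fin 2))) := by
  by_contra hlt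
  push_neg at hlt
  have hLne : ((affineSpan ℝ ({p, q} : Set (EuclideanSpace ℝ (Fin 2)))) :
      Set (EuclideanSpace ℝ (Fin 2))).Nonempty :=
    ⟨p, left_mem_affineSpan_pair ℝ p q⟩
  obtain ⟨z, hzL, hz⟩ := (Metric.infDist_lt_iff hLne).mp hlt
  -- z is in the open ball, hence in E
  have hzE : z ∈ E := hball (by rw [mem_closedBall, dist_comm]; exact hz.le)
  -- Key lemma: half-open segments from z to points of `closure E` lie in E
  have key : ∀ x ∈ closure E, ∀ s : ℝ, 0 ≤ s → s < 1 → (1 - s) • z + s • x ∈ E := by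
    intro x hx s hs0 hs1
    rcases eq_or_lt_of_le hs0 with h0 | h0
    · have : (1 - s) • z + s • x = z := by rw [← h0]; module
      rw [this]; exact hzE
    · have hs1' : (0:ℝ) < 1 - s := by linarith
      have hrd : 0 < r - dist c z := by linarith
      have hε : 0 < (1 - s) / s * (r - dist c z) := by positivity
      obtain ⟨x', hx'E, hxx'⟩ := Metric.mem_closure_iff.mp hx _ hε
      set y' : EuclideanSpace ℝ (Fin 2) := z + (s / (1 - s)) • (x - x') with hy'
      have hy'ball : y' ∈ closedBall c r := by
        rw [mem_closedBall, dist_comm]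
        have h1 : dist c y' ≤ dist c z + dist z y' := dist_triangle c z y'
        have h2 : dist z y' = (s / (1 - s)) * dist x x' := by
          rw [hy', dist_eq_norm]
          have : z - (z + (s / (1 - s)) • (x - x')) = (s / (1 - s)) • (x' - x) := by
            module
          rw [this, norm_smul, dist_eq_norm]
          rw [Real.norm_eq_abs, abs_of_pos (by positivity)]
          congr 1
          rw [← neg_sub x' x, norm_neg]
        have h3 : (s / (1 - s)) * dist x x' < (s / (1 - s)) * ((1 - s) / s * (r - dist c z)) :=
          mul_lt_mul_of_pos_left hxx' (by positivity)
        have h4 : (s / (1 - s)) * ((1 - s) / s * (r - dist c z)) = r - dist c z := by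
          field_simp
        linarith [h1, h2 ▸ h1, h3, h4]
      have hmem : (1 - s) • y' + s • x' ∈ segment ℝ y' x' :=
        ⟨1 - s, s, le_of_lt hs1', le_of_lt h0, by linarith, rfl⟩
      have heq : (1 - s) • y' + s • x' = (1 - s) • z + s • x := by
        rw [hy']
        match_scalars <;> field_simp <;> ring
      rw [← heq]
      exact hstar x' hx'E y' hy'ball hmem
  -- The midpoint m of the segment lies on the frontier
  set m : EuclideanSpace ℝ (Fin 2) := (1/2 : ℝ) • p + (1/2 : ℝ) • q with hm
  have hmseg : m ∈ segment ℝ p q := ⟨1/2, 1/2, by norm_num, by norm_num, by norm_num, rfl⟩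
  have hmF : m ∈ frontier E := hedge hmseg
  have hmnE : m ∉ E := by
    intro h
    have := hEopen.frontier_eq ▸ hmF
    exact this.2 h
  have hmclos : m ∈ closure E := frontier_subset_closure hmF
  have hzm : z ≠ m := fun h => hmnE (h ▸ hzE)
  -- coordinates of z on the line
  have hz' : (z - p) +ᵥ p ∈ line[ℝ, p, q] := by
    simpa using hzL
  obtain ⟨a, ha⟩ := (vadd_left_mem_affineSpan_pair).mp hz'
  have hza : z = (1 - a) • p + a • q := by
    have : a • (q - p) = z - p := by simpa using ha
    have h3 : a • (q - p) + p = z := eq_sub_iff_add_eq.mp this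
    rw [← h3]; module
  have hd : (1/2 : ℝ) - a ≠ 0 := by
    intro h
    apply hzm
    have ha2 : a = 1/2 := by linarith [sub_eq_zero.mp h]
    rw [hza, ha2, hm]; norm_num
  set d : ℝ := 1/2 - a with hdd
  set t : ℝ := 1 / (4 * |d|) with htd
  have hdpos : 0 < |d| := abs_pos.mpr hd
  have ht : 0 < t := by positivity
  have htd4 : |t * d| = 1/4 := by
    rw [abs_mul, htd, abs_of_pos (by positivity : (0:ℝ) < 1 / (4 * |d|))]
    field_simp
  have htdb : -(1/4 : ℝ) ≤ t * d ∧ t * d ≤ 1/4 := by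
    constructor <;> [exact neg_le_of_abs_le htd4.le; exact le_of_abs_le htd4.le]
  set s' : ℝ := 1/2 + t * d with hs'
  have hs'0 : 0 ≤ s' := by rw [hs']; linarith [htdb.1]
  have hs'1 : s' ≤ 1 := by rw [hs']; linarith [htdb.2]
  set w : EuclideanSpace ℝ (Fin 2) := (1 - s') • p + s' • q with hw
  have hwseg : w ∈ segment ℝ p q := ⟨1 - s', s', by linarith, hs'0, by ring, rfl⟩
  have hwclos : w ∈ closure E := frontier_subset_closure (hedge hwseg)
  set σ : ℝ := 1 / (1 + t) with hσ
  have h1t : (0:ℝ) < 1 + t := by linarith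
  have hσ0 : 0 ≤ σ := by positivity
  have hσ1 : σ < 1 := by
    rw [hσ, div_lt_one h1t]; linarith
  have hmid : (1 - σ) • z + σ • w = m := by
    rw [hza, hw, hm, hσ, hs', hdd]
    match_scalars <;> field_simp <;> ring
  have : m ∈ E := hmid ▸ key w hwclos σ hσ0 hσ1
  exact hmnE this
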